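/- The operator Ĵ on ℋ = L²(ℝⁿ×ℝⁿ×ℝ) defined by (Ĵξ)(x,y,r) = (e^{λr})ⁿ conj(ξ(e^{λr}x, e^{λr}y, −r)) is an anti-unitary involution: Ĵ is conjugate-linear, Ĵ² = 1, and ⟨Ĵξ, Ĵη⟩ = ⟨η, ξ⟩ for all ξ, η ∈ ℋ. -/

import Mathlib

open MeasureTheory
noncomputable section

/-- ℝⁿ -/
abbrev Rn (n : ℕ) := Fin n → ℝ

/-- η_λ(r) = (e^{2λr} − 1)/(2λ) -/
def eta (l r : ℝ) : ℝ := (Real.exp (2 * l * r) - 1) / (2 * l)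

/-- ē(t) = e^{−2πit} -/
def ebar (t : ℝ) : ℂ := Complex.exp (-2 * Real.pi * t * Complex.I)

/-- standard inner product β on ℝⁿ -/
def beta {n : ℕ} (x y : Rn n) : ℝ := ∑ i, x i * y i

/-- membership in 𝒜: Schwartz in (x,y,r), compactly supported in r -/
def IsA {n : ℕ} (f : Rn n → Rn n → ℝ → ℂ) : Prop :=
  (∃ F : SchwartzMap ((Rn n × Rn n) × ℝ) ℂ, ∀ x y r, f x y r = F ((x, y), r)) ∧
  (∃ C : ℝ, ∀ x y r, f x y r ≠ 0 → |r| ≤ C)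

/-- twisted convolution product -/
def tMul {n : ℕ} (l : ℝ) (f g : Rn n → Rn n → ℝ → ℂ) : Rn n → Rn n → ℝ → ℂ :=
  fun x y r => ∫ xt : Rn n, ∫ yt : Rn n,
    f xt yt r * g (x - xt) (y - yt) r * ebar (eta l r * beta xt (y - yt))

/-- twisted involution -/
def tStar {n : ℕ} (l : ℝ) (f : Rn n → Rn n → ℝ → ℂ) : Rn n → Rn n → ℝ → ℂ :=
  fun x y r => (starRingEnd ℂ) (f (-x) (-y) r) * ebar (eta l r * beta x y)

/-- φ(f) = ∫ f(0,0,r) dr -/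
def PhiF {n : ℕ} (f : Rn n → Rn n → ℝ → ℂ) : ℂ := ∫ r : ℝ, f 0 0 r

/-- continuous with compact support (as a function of all variables) -/
def CC {n : ℕ} (ξ : Rn n → Rn n → ℝ → ℂ) : Prop :=
  Continuous (fun p : (Rn n × Rn n) × ℝ => ξ p.1.1 p.1.2 p.2) ∧
  HasCompactSupport (fun p : (Rn n × Rn n) × ℝ => ξ p.1.1 p.1.2 p.2)

/-- L² inner product ⟨f,g⟩ (linear in the first variable, conjugate in the second) -/
def ip {n : ℕ} (f g : Rn n → Rn n → ℝ → ℂ) : ℂ :=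
  ∫ x : Rn n, ∫ y : Rn n, ∫ r : ℝ, f x y r * (starRingEnd ℂ) (g x y r)

/-- the regular representation L_f ξ (same integral formula as the twisted product) -/
def Lop {n : ℕ} (l : ℝ) (f ξ : Rn n → Rn n → ℝ → ℂ) : Rn n → Rn n → ℝ → ℂ :=
  tMul l f ξ

/-- the operator Ĵ on ℋ -/
def Jhat {n : ℕ} (l : ℝ) (ξ : Rn n → Rn n → ℝ → ℂ) : Rn n → Rn n → ℝ → ℂ :=
  fun x y r => (((Real.exp (l * r)) ^ n : ℝ) : ℂ) *
    (starRingEnd ℂ) (ξ (Real.exp (l * r) • x) (Real.exp (l * r) • y) (-r))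

/-- uncurrying of a three-variable function -/
def unc3 {n : ℕ} (ξ : Rn n → Rn n → ℝ → ℂ) : (Rn n × Rn n) × ℝ → ℂ :=
  fun p => ξ p.1.1 p.1.2 p.2

namespace JhatAux

open ENNReal

variable (n : ℕ) (l : ℝ)

/-- the "spatial" part of the domain -/
abbrev EE (n : ℕ) := Rn n × Rn n

/-- the change of variables underlying `Jhat` -/
def Phi (n : ℕ) (l : ℝ) : EE n × ℝ → EE n × ℝ :=
  fun p => (Real.exp (l * p.2) • p.1, -p.2)

lemma Phi_involutive : Function.Involutive (Phi n l) := by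
  intro p
  simp only [Phi, neg_neg, smul_smul, ← Real.exp_add]
  rw [show l * -p.2 + l * p.2 = 0 by ring, Real.exp_zero, one_smul]

lemma continuous_Phi : Continuous (Phi n l) := by
  refine Continuous.prodMk ?_ continuous_snd.neg
  exact (Real.continuous_exp.comp (continuous_const.mul continuous_snd)).smul continuous_fst

/-- `Phi` as a measurable equivalence -/
def PhiE : EE n × ℝ ≃ᵐ EE n × ℝ :=
  MeasurableEquiv.ofInvolutive (Phi n l) (Phi_involutive n l) (continuous_Phi n l).measurable

lemma PhiE_coe : ⇑(PhiE n l) = Phi n l := rfl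

/-- the weight function -/
def w (n : ℕ) (l : ℝ) : EE n × ℝ → NNReal :=
  fun p => Real.toNNReal (Real.exp (l * p.2) ^ (2 * n))

lemma w_meas : Measurable (w n l) := by
  apply Measurable.real_toNNReal
  exact ((Real.continuous_exp.comp (continuous_const.mul continuous_snd)).pow _).measurable

lemma w_coe (p : EE n × ℝ) : ((w n l p : ℝ)) = Real.exp (l * p.2) ^ (2 * n) :=
  Real.coe_toNNReal _ (by positivity)

instance : Measure.IsAddHaarMeasure (volume : Measure (EE n)) :=
  Measure.prod.instIsAddHaarMeasure _ _

lemma finrank_EE : Module.finrank ℝ (EE n) = 2 * n := by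
  rw [Module.finrank_prod, Module.finrank_pi, Fintype.card_fin, two_mul]

/-- the key change-of-variables fact: `Phi` maps the weighted measure to Lebesgue measure -/
lemma map_Phi :
    Measure.map (Phi n l) (volume.withDensity fun p => ((w n l p : ℝ≥0∞))) = volume := by
  ext s hs
  have hPm : Measurable (Phi n l) := (continuous_Phi n l).measurable
  rw [Measure.map_apply hPm hs, withDensity_apply _ (hPm hs),
    ← lintegral_indicator (hPm hs)]
  have hvol : (volume : Measure (EE n × ℝ)) = (volume : Measure (EE n)).prod volume :=
    Measure.volume_eq_prod _ _
  have hfmeas : Measurable (((Phi n l) ⁻¹' s).indicator fun p => ((w n l p : ℝ≥0∞))) :=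
    Measurable.indicator (measurable_coe_nnreal_ennreal.comp (w_meas n l)) (hPm hs)
  rw [hvol, lintegral_prod_symm' (((Phi n l) ⁻¹' s).indicator fun p => ((w n l p : ℝ≥0∞))) hfmeas]
  have hinner : ∀ r : ℝ,
      (∫⁻ xy, ((Phi n l) ⁻¹' s).indicator (fun p => ((w n l p : ℝ≥0∞))) (xy, r)) =
      volume ((fun z : EE n => (z, -r)) ⁻¹' s) := by
    intro r
    have hslice : MeasurableSet ((fun z : EE n => (z, -r)) ⁻¹' s) :=
      hs.preimage (measurable_id.prodMk measurable_const)
    have heq : (fun xy => ((Phi n l) ⁻¹' s).indicator (fun p => ((w n l p : ℝ≥0∞))) (xy, r)) =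
        ((Real.exp (l * r) • ·) ⁻¹' ((fun z : EE n => (z, -r)) ⁻¹' s)).indicator
          (fun _ => (ENNReal.ofReal (Real.exp (l * r) ^ (2 * n)))) := by
      funext xy
      by_cases hmem : (Real.exp (l * r) • xy, -r) ∈ s
      · rw [Set.indicator_of_mem (by exact hmem) (fun p => ((w n l p : ℝ≥0∞))),
          Set.indicator_of_mem (by exact hmem)]
        rw [← w_coe n l (xy, r), ENNReal.ofReal_coe_nnreal]
      · rw [Set.indicator_of_notMem (by exact hmem) (fun p => ((w n l p : ℝ≥0∞))),
          Set.indicator_of_notMem (by exact hmem)]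
    rw [heq, lintegral_indicator_const (hslice.preimage (measurable_const_smul _)),
      Measure.addHaar_preimage_smul _ (Real.exp_ne_zero _), finrank_EE]
    rw [← mul_assoc, ← ENNReal.ofReal_mul (by positivity)]
    rw [abs_of_nonneg (by positivity), mul_inv_cancel₀ (by positivity), ENNReal.ofReal_one,
      one_mul]
  simp only [hinner]
  have hneg := (Measure.measurePreserving_neg (volume : Measure ℝ)).lintegral_comp
    (f := fun r : ℝ => volume ((fun z : EE n => (z, r)) ⁻¹' s))
    (measurable_measure_prodMk_right hs)
  rw [hneg, Measure.prod_apply_symm hs]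

lemma measurePreserving_Phi :
    MeasurePreserving (Phi n l) (volume.withDensity fun p => ((w n l p : ℝ≥0∞))) volume :=
  ⟨(continuous_Phi n l).measurable, map_Phi n l⟩

/-- iterated integrals equal the integral over the product space -/
lemma iter_eq (H : EE n × ℝ → ℂ) (hH : Integrable H volume) :
    (∫ x : Rn n, ∫ y : Rn n, ∫ r : ℝ, H ((x, y), r)) = ∫ p, H p := by
  have hv1 : (volume : Measure (EE n × ℝ)) = (volume : Measure (EE n)).prod volume :=
    Measure.volume_eq_prod _ _
  have hv2 : (volume : Measure (EE n)) = (volume : Measure (Rn n)).prod volume :=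
    Measure.volume_eq_prod _ _
  have hH1 : Integrable H ((volume : Measure (EE n)).prod volume) := by rwa [← hv1]
  have hH2 : Integrable (fun xy : EE n => ∫ r : ℝ, H (xy, r))
      ((volume : Measure (Rn n)).prod volume) := by
    rw [← hv2]; exact hH1.integral_prod_left
  calc (∫ x : Rn n, ∫ y : Rn n, ∫ r : ℝ, H ((x, y), r))
      = ∫ xy : EE n, ∫ r : ℝ, H (xy, r) := by
        rw [hv2, MeasureTheory.integral_prod _ hH2]
    _ = ∫ p, H p := by rw [hv1, MeasureTheory.integral_prod _ hH1]

end JhatAux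

open JhatAux ENNReal

/-- Ĵ is an anti-unitary involution on ℋ -/
theorem Jhat_antiunitary_involution (n : ℕ) (l : ℝ) :
    (∀ (a : ℂ) (ξ η : Rn n → Rn n → ℝ → ℂ),
      Jhat l (fun x y r => a * ξ x y r + η x y r) =
        fun x y r => (starRingEnd ℂ) a * Jhat l ξ x y r + Jhat l η x y r) ∧
    (∀ ξ : Rn n → Rn n → ℝ → ℂ, Jhat l (Jhat l ξ) = ξ) ∧
    (∀ ξ η : Rn n → Rn n → ℝ → ℂ, MemLp (unc3 ξ) 2 volume → MemLp (unc3 η) 2 volume →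
      ip (Jhat l ξ) (Jhat l η) = ip η ξ) := by
  refine ⟨?_, ?_, ?_⟩
  · -- conjugate linearity
    intro a ξ η
    funext x y r
    simp only [Jhat, map_add, map_mul]
    ring
  · -- involution
    intro ξ
    funext x y r
    have h : Real.exp (l * -r) * Real.exp (l * r) = 1 := by
      rw [← Real.exp_add, show l * -r + l * r = 0 by ring, Real.exp_zero]
    simp only [Jhat, neg_neg, smul_smul, h, one_smul, map_mul, Complex.conj_conj,
      Complex.conj_ofReal]
    rw [← mul_assoc, ← Complex.ofReal_mul, ← mul_pow, mul_comm (Real.exp (l * r)), h, one_pow,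
      Complex.ofReal_one, one_mul]
  · -- anti-unitarity
    intro ξ η hξ hη
    set G : EE n × ℝ → ℂ := fun p => unc3 η p * (starRingEnd ℂ) (unc3 ξ p) with hGdef
    -- conjugate of an L² function is L²
    have hconj : MemLp (fun p => (starRingEnd ℂ) (unc3 ξ p)) 2 volume := by
      refine hξ.of_le (RCLike.continuous_conj.comp_aestronglyMeasurable hξ.1) ?_
      filter_upwards with p
      simp [RCLike.norm_conj]
    -- G is integrable
    have hG : Integrable G volume := by
      rw [← memLp_one_iff_integrable]
      have hpqr : (1 : ℝ≥0∞) / 1 = 1 / 2 + 1 / 2 := by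
        rw [ENNReal.div_add_div_same, one_add_one_eq_two,
          ENNReal.div_self two_ne_zero ENNReal.ofNat_ne_top, div_one]
      haveI : ENNReal.HolderTriple 2 2 1 := ⟨by rw [ENNReal.inv_two_add_inv_two, inv_one]⟩
      have := MemLp.smul (φ := unc3 η) (r := 1) hconj hη
      exact this
    -- integrability of the transformed integrand
    have hGmap : Integrable G
        (Measure.map (Phi n l) (volume.withDensity fun p => ((w n l p : ℝ≥0∞)))) := by
      rwa [map_Phi n l]
    have hGcomp : Integrable (G ∘ Phi n l)
        (volume.withDensity fun p => ((w n l p : ℝ≥0∞))) := by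
      rw [← PhiE_coe n l] at hGmap ⊢
      exact ((PhiE n l).measurableEmbedding.integrable_map_iff).mp hGmap
    have hK : Integrable (fun p => w n l p • G (Phi n l p)) volume := by
      exact (integrable_withDensity_iff_integrable_smul₀ (w_meas n l).aemeasurable).mp hGcomp
    -- pointwise identity for the transformed integrand
    have hpoint : ∀ p : EE n × ℝ,
        Jhat l ξ p.1.1 p.1.2 p.2 * (starRingEnd ℂ) (Jhat l η p.1.1 p.1.2 p.2) =
          w n l p • G (Phi n l p) := by
      intro p
      obtain ⟨⟨x, y⟩, r⟩ := p
      have hs : w n l ((x, y), r) • G (Phi n l ((x, y), r)) =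
          ((Real.exp (l * r) ^ (2 * n) : ℝ) : ℂ) * G (Phi n l ((x, y), r)) := by
        rw [NNReal.smul_def, ← w_coe n l ((x, y), r)]
        simp [Complex.real_smul]
      rw [hs]
      simp only [hGdef, Phi, unc3, Prod.smul_fst, Prod.smul_snd, Jhat, map_mul,
        Complex.conj_conj, Complex.conj_ofReal]
      rw [show (2 : ℕ) * n = n + n from two_mul n, pow_add, Complex.ofReal_mul]
      ring
    -- put everything together
    have hL : ip (Jhat l ξ) (Jhat l η) =
        ∫ p, (fun q => w n l q • G (Phi n l q)) p := by
      rw [ip, ← iter_eq n (fun q => w n l q • G (Phi n l q)) hK]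
      simp only [← hpoint]
    have hR : ip η ξ = ∫ p, G p := by
      rw [ip, ← iter_eq n G hG]
      rfl
    rw [hL, hR]
    rw [show (∫ p, (fun q => w n l q • G (Phi n l q)) p) =
        ∫ p, G (Phi n l p) ∂(volume.withDensity fun p => ((w n l p : ℝ≥0∞))) from
      (integral_withDensity_eq_integral_smul (w_meas n l) _).symm]
    exact (measurePreserving_Phi n l).integral_comp (PhiE n l).measurableEmbedding G
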